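/- Let N, M be finite sets and suppose each valuation ṽ_i : 2^M → ℝ≥0 is monotone and ε-close to a linear valuation ℓ_i. Then there exists a full allocation (S_1, …, S_n) of M (pairwise disjoint sets with union M) such that Σ_i ṽ_i(S_i) ≥ LP(ṽ)/(1+ε), where LP(ṽ) is the configuration LP value for the valuations ṽ; in particular Σ_i ṽ_i(S_i) ≥ OPT(ṽ)/(1+ε). -/

import Mathlib

/-- Feasibility for the configuration LP: `x i S` is the (fractional) weight
with which player `i` receives bundle `S`; weights are nonnegative, each
player's weights sum to `1`, and each item is fractionally allocated at most
once. -/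
def ConfigLPFeasible {N M : Type*} [Fintype N] [Fintype M] [DecidableEq M]
    (x : N → Finset M → ℝ) : Prop :=
  (∀ (i : N) (S : Finset M), 0 ≤ x i S) ∧
  (∀ i : N, ∑ S : Finset M, x i S = 1) ∧
  (∀ j : M, ∑ i : N, ∑ S ∈ Finset.univ.filter (fun S : Finset M => j ∈ S), x i S ≤ 1)

/-- The optimal value of the configuration LP for valuations `w`. -/
noncomputable def configLP {N M : Type*} [Fintype N] [Fintype M] [DecidableEq M]
    (w : N → Finset M → ℝ) : ℝ :=
  sSup {y : ℝ | ∃ x : N → Finset M → ℝ, ConfigLPFeasible x ∧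
    y = ∑ i : N, ∑ S : Finset M, x i S * w i S}

/-- The optimal social welfare for valuations `w`: the supremum of
`Σ_i w_i(T_i)` over allocations (families of pairwise disjoint bundles). -/
noncomputable def optWelfare {N M : Type*} [Fintype N] [Fintype M] [DecidableEq M]
    (w : N → Finset M → ℝ) : ℝ :=
  sSup {y : ℝ | ∃ T : N → Finset M,
    (∀ i i' : N, i ≠ i' → Disjoint (T i) (T i')) ∧ y = ∑ i : N, w i (T i)}

/-- rounding the configuration LP for valuations close to
linear.  If each `ṽ_i` is monotone and `ε`-close to a linear valuation `ℓ_i`,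
then there is a full allocation `(S_i)` (pairwise disjoint, covering `M`) with
`Σ_i ṽ_i(S_i) ≥ LP(ṽ)/(1+ε)`, and in particular `Σ_i ṽ_i(S_i) ≥ OPT(ṽ)/(1+ε)`. -/
theorem configLP_rounding_close_to_linear
    {N M : Type*} [Fintype N] [Fintype M] [DecidableEq N] [DecidableEq M]
    [Nonempty N]
    (ε : ℝ) (hε : 0 ≤ ε)
    (vt : N → Finset M → ℝ)
    (hvt : ∀ (i : N) (S : Finset M), 0 ≤ vt i S)
    (hmono : ∀ (i : N) (S T : Finset M), S ⊆ T → vt i S ≤ vt i T)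
    (c : N → ℝ) (hc : ∀ i, 0 ≤ c i)
    (l : N → M → ℝ) (hl : ∀ i j, 0 ≤ l i j)
    (ℓ : N → Finset M → ℝ)
    (hℓ : ∀ (i : N) (S : Finset M), ℓ i S = c i + ∑ j ∈ S, l i j)
    (hclose : ∀ (i : N) (S : Finset M),
      ℓ i S ≤ vt i S ∧ vt i S ≤ (1 + ε) * ℓ i S) :
    ∃ S : N → Finset M,
      (∀ i i' : N, i ≠ i' → Disjoint (S i) (S i')) ∧
      (∀ j : M, ∃ i : N, j ∈ S i) ∧
      (∑ i : N, vt i (S i) ≥ configLP vt / (1 + ε)) ∧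
      (∑ i : N, vt i (S i) ≥ optWelfare vt / (1 + ε)) := by
  have hε1 : (0:ℝ) < 1 + ε := by linarith
  -- choose for each item an argmax player
  have hex : ∀ j : M, ∃ i : N, ∀ i', l i' j ≤ l i j := fun j =>
    Finite.exists_max (fun i => l i j)
  choose f hf using hex
  set S : N → Finset M := fun i => Finset.univ.filter (fun j => f j = i) with hS
  have hdisj : ∀ i i' : N, i ≠ i' → Disjoint (S i) (S i') := by
    intro i i' h
    rw [Finset.disjoint_left]
    intro j hj hj'
    simp only [hS, Finset.mem_filter] at hj hj'
    exact h (hj.2 ▸ hj'.2)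
  have hcover : ∀ j : M, ∃ i : N, j ∈ S i := by
    intro j
    exact ⟨f j, by simp [hS]⟩
  -- the value of the rounded allocation
  set W : ℝ := ∑ i : N, vt i (S i) with hWdef
  have hLW : ∑ i : N, ℓ i (S i) ≤ W :=
    Finset.sum_le_sum fun i _ => (hclose i (S i)).1
  have hB : ∑ i : N, ℓ i (S i) = (∑ i : N, c i) + ∑ j : M, l (f j) j := by
    have h1 : ∀ i : N, ℓ i (S i) = c i + ∑ j ∈ S i, l i j := fun i => hℓ i (S i)
    rw [Finset.sum_congr rfl (fun i _ => h1 i), Finset.sum_add_distrib]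
    congr 1
    have : ∀ i : N, ∑ j ∈ S i, l i j
        = ∑ j : M, if f j = i then l i j else 0 := by
      intro i
      simp only [hS, Finset.sum_filter]
    rw [Finset.sum_congr rfl (fun i _ => this i), Finset.sum_comm]
    refine Finset.sum_congr rfl fun j _ => ?_
    rw [Finset.sum_ite_eq]
    simp
  -- every feasible LP value is at most (1+ε) * W
  have hLPbound : ∀ x : N → Finset M → ℝ, ConfigLPFeasible x →
      ∑ i : N, ∑ T : Finset M, x i T * vt i T ≤ (1 + ε) * W := by
    intro x hx
    obtain ⟨hx0, hx1, hx2⟩ := hx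
    have step1 : ∑ i : N, ∑ T : Finset M, x i T * vt i T
        ≤ (1 + ε) * ∑ i : N, ∑ T : Finset M, x i T * ℓ i T := by
      rw [Finset.mul_sum]
      refine Finset.sum_le_sum fun i _ => ?_
      rw [Finset.mul_sum]
      refine Finset.sum_le_sum fun T _ => ?_
      have := (hclose i T).2
      calc x i T * vt i T ≤ x i T * ((1 + ε) * ℓ i T) :=
            mul_le_mul_of_nonneg_left this (hx0 i T)
        _ = (1 + ε) * (x i T * ℓ i T) := by ring
    have step2 : ∑ i : N, ∑ T : Finset M, x i T * ℓ i T
        ≤ (∑ i : N, c i) + ∑ j : M, l (f j) j := by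
      have expand : ∀ i : N, ∑ T : Finset M, x i T * ℓ i T
          = c i + ∑ j : M, l i j *
              (∑ T ∈ Finset.univ.filter (fun T : Finset M => j ∈ T), x i T) := by
        intro i
        have : ∀ T : Finset M, x i T * ℓ i T
            = x i T * c i + ∑ j ∈ T, x i T * l i j := by
          intro T
          rw [hℓ, mul_add, Finset.mul_sum]
        rw [Finset.sum_congr rfl (fun T _ => this T), Finset.sum_add_distrib,
          ← Finset.sum_mul, hx1 i, one_mul]
        congr 1
        have h2 : ∀ T : Finset M, ∑ j ∈ T, x i T * l i j
            = ∑ j : M, if j ∈ T then x i T * l i j else 0 := by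
          intro T
          rw [Finset.sum_ite_mem, Finset.univ_inter]
        rw [Finset.sum_congr rfl (fun T _ => h2 T), Finset.sum_comm]
        refine Finset.sum_congr rfl fun j _ => ?_
        rw [Finset.mul_sum, Finset.sum_filter]
        refine Finset.sum_congr rfl fun T _ => ?_
        split <;> ring_nf
      rw [Finset.sum_congr rfl (fun i _ => expand i), Finset.sum_add_distrib]
      refine add_le_add (le_refl _) ?_
      rw [Finset.sum_comm]
      refine Finset.sum_le_sum fun j _ => ?_
      calc ∑ i : N, l i j *
            (∑ T ∈ Finset.univ.filter (fun T : Finset M => j ∈ T), x i T)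
          ≤ ∑ i : N, l (f j) j *
            (∑ T ∈ Finset.univ.filter (fun T : Finset M => j ∈ T), x i T) := by
            refine Finset.sum_le_sum fun i _ => ?_
            refine mul_le_mul_of_nonneg_right (hf j i) ?_
            exact Finset.sum_nonneg fun T _ => hx0 i T
        _ = l (f j) j * ∑ i : N,
            (∑ T ∈ Finset.univ.filter (fun T : Finset M => j ∈ T), x i T) := by
            rw [Finset.mul_sum]
        _ ≤ l (f j) j * 1 := mul_le_mul_of_nonneg_left (hx2 j) (hl (f j) j)
        _ = l (f j) j := mul_one _
    calc ∑ i : N, ∑ T : Finset M, x i T * vt i T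
        ≤ (1 + ε) * ∑ i : N, ∑ T : Finset M, x i T * ℓ i T := step1
      _ ≤ (1 + ε) * ((∑ i : N, c i) + ∑ j : M, l (f j) j) :=
          mul_le_mul_of_nonneg_left step2 (le_of_lt hε1)
      _ = (1 + ε) * ∑ i : N, ℓ i (S i) := by rw [hB]
      _ ≤ (1 + ε) * W := mul_le_mul_of_nonneg_left hLW (le_of_lt hε1)
  -- any disjoint allocation gives a feasible LP point with the same value
  have halloc : ∀ T : N → Finset M,
      (∀ i i' : N, i ≠ i' → Disjoint (T i) (T i')) →
      (∑ i : N, vt i (T i)) ∈ {y : ℝ | ∃ x : N → Finset M → ℝ,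
        ConfigLPFeasible x ∧ y = ∑ i : N, ∑ S : Finset M, x i S * vt i S} := by
    intro T hT
    refine ⟨fun i U => if U = T i then 1 else 0, ⟨?_, ?_, ?_⟩, ?_⟩
    · intro i U; dsimp only; split <;> norm_num
    · intro i; simp
    · intro j
      have hone : ∀ i : N,
          ∑ U ∈ Finset.univ.filter (fun U : Finset M => j ∈ U),
            (if U = T i then (1:ℝ) else 0) = if j ∈ T i then 1 else 0 := by
        intro i
        rw [Finset.sum_ite_eq']
        simp
      rw [Finset.sum_congr rfl (fun i _ => hone i), Finset.sum_boole]
      have : (Finset.univ.filter (fun i : N => j ∈ T i)).card ≤ 1 := by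
        rw [Finset.card_le_one]
        intro a ha b hb
        simp only [Finset.mem_filter] at ha hb
        by_contra hne
        exact (Finset.disjoint_left.mp (hT a b hne) ha.2) hb.2
      exact_mod_cast this
    · refine (Finset.sum_congr rfl fun i _ => ?_).symm
      simp [ite_mul]
  -- the LP set is nonempty and bounded above by (1+ε) * W
  have hne : ({y : ℝ | ∃ x : N → Finset M → ℝ, ConfigLPFeasible x ∧
      y = ∑ i : N, ∑ S : Finset M, x i S * vt i S}).Nonempty :=
    ⟨_, halloc S hdisj⟩
  have hub : ∀ y ∈ {y : ℝ | ∃ x : N → Finset M → ℝ, ConfigLPFeasible x ∧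
      y = ∑ i : N, ∑ S : Finset M, x i S * vt i S}, y ≤ (1 + ε) * W := by
    rintro y ⟨x, hx, rfl⟩
    exact hLPbound x hx
  have hLPle : configLP vt ≤ (1 + ε) * W := csSup_le hne hub
  have hOPTle : optWelfare vt ≤ configLP vt := by
    refine csSup_le_csSup ⟨(1 + ε) * W, hub⟩
      ⟨∑ i : N, vt i ∅, fun _ => ∅, fun i i' _ => by simp, rfl⟩ ?_
    rintro y ⟨T, hT, rfl⟩
    exact halloc T hT
  refine ⟨S, hdisj, hcover, ?_, ?_⟩
  · rw [ge_iff_le, div_le_iff₀ hε1, mul_comm]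
    exact hLPle
  · rw [ge_iff_le, div_le_iff₀ hε1, mul_comm]
    exact le_trans hOPTle hLPle
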